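/- Let i ∈ R(u,v) be a reduced word and {i,j} an edge of Π. Let {B,C} and {B',C'} (with B ≺ C, B' ≺ C', C ≺ C') be two consecutive inclined edges of the (i,j)-strip of Σ(i), i.e., no vertex D with B ≺ D ≺ B' is the left end of an inclined edge of the strip. Then the boundary of the triangle or trapezoid formed by these two inclined edges and the horizontal segments between their endpoints on each level (these horizontal segments being paths of consecutive horizontal edges of the strip) is a directed cycle in Σ_{i,j}(i). -/

import Mathlib

open scoped Classical

namespace SLC

variable {V : Type*} [DecidableEq V]

/-- The simply-laced Coxeter matrix associated with a simple graph `P`: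
`M i i = 1`, `M i j = 3` if `i` and `j` are adjacent, and `M i j = 2` otherwise. -/
noncomputable def coxeterMatrix (P : SimpleGraph V) : CoxeterMatrix V where
  M := fun i j => if i = j then 1 else if P.Adj i j then 3 else 2
  isSymm := by
    refine Matrix.IsSymm.ext fun i j => ?_
    show (if j = i then 1 else if P.Adj j i then 3 else 2) =
      (if i = j then 1 else if P.Adj i j then 3 else 2)
    by_cases h : i = j
    · subst h; rfl
    · rw [if_neg (Ne.symm h), if_neg h]
      by_cases ha : P.Adj i j
      · rw [if_pos (P.adj_symm ha), if_pos ha]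
      · rw [if_neg (fun hc => ha (P.adj_symm hc)), if_neg ha]
  diagonal := by intro i; simp
  off_diagonal := by
    intro i i' h
    show (if i = i' then 1 else if P.Adj i i' then 3 else 2) ≠ 1
    rw [if_neg h]
    split <;> omega

/-- `e` is a reduced word for the pair `(u, v)`: the subword of entries with negative sign
(first component `false`), with signs forgotten, is a reduced word for `u`, and the subword of
entries with positive sign is a reduced word for `v`. -/
def IsRWordPair {W : Type*} [Group W] (P : SimpleGraph V)
    (cs : CoxeterSystem (coxeterMatrix P) W) (u v : W) {m : ℕ}
    (e : Fin m → Bool × V) : Prop :=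
  cs.wordProd (((List.ofFn e).filter fun p => !p.1).map Prod.snd) = u ∧
    (((List.ofFn e).filter fun p => !p.1).map Prod.snd).length = cs.length u ∧
    cs.wordProd (((List.ofFn e).filter fun p => p.1).map Prod.snd) = v ∧
    (((List.ofFn e).filter fun p => p.1).map Prod.snd).length = cs.length v

/-- `k = l⁻`: `k` is the largest index smaller than `l` carrying the same letter of `P`. -/
def IsPred {m : ℕ} (e : Fin m → Bool × V) (k l : Fin m) : Prop :=
  k < l ∧ (e k).2 = (e l).2 ∧ ∀ j, k < j → j < l → (e j).2 ≠ (e l).2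

/-- The index `l` is `e`-bounded: `l⁻ > 0`, i.e. `l` has a predecessor. -/
def BoundedIdx {m : ℕ} (e : Fin m → Bool × V) (l : Fin m) : Prop :=
  ∃ k, IsPred e k l

/-- Conditions (ii) and (iii) of Definition 3.1 (inclined edges), for `k < l`. -/
def InclCond {m : ℕ} (P : SimpleGraph V) (e : Fin m → Bool × V) (k l : Fin m) : Prop :=
  k < l ∧ P.Adj (e k).2 (e l).2 ∧
    ((∃ p, IsPred e p l ∧ p < k ∧ (∀ q, IsPred e q k → q < p) ∧ (e p).1 = (e k).1) ∨
     (∃ q, IsPred e q k ∧ (∀ p, IsPred e p l → p < q) ∧ (e q).1 = !(e k).1))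

/-- `a → b` is a directed edge of the graph `Σ(e)`. -/
def DirEdge {m : ℕ} (P : SimpleGraph V) (e : Fin m → Bool × V) (a b : Fin m) : Prop :=
  (IsPred e a b ∧ (e a).1 = true) ∨ (IsPred e b a ∧ (e b).1 = false) ∨
    (InclCond P e a b ∧ (e a).1 = false) ∨ (InclCond P e b a ∧ (e b).1 = true)

/-- `{a, b}` is an edge of the graph `Σ(e)` (in some direction). -/
def UEdge {m : ℕ} (P : SimpleGraph V) (e : Fin m → Bool × V) (a b : Fin m) : Prop :=
  DirEdge P e a b ∨ DirEdge P e b a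

/-- Adjacency in the doubled graph `P̃`. -/
def TAdj (P : SimpleGraph V) (p q : Bool × V) : Prop :=
  p.1 = q.1 ∧ P.Adj p.2 q.2

/-- The negative of a letter of `P̃`. -/
def negEnt (p : Bool × V) : Bool × V := (!p.1, p.2)

/-- The combinatorial data of a 2- or 3-move: the (consecutive) positions involved. -/
inductive MoveSpec (m : ℕ) where
  | two (a b : Fin m)
  | three (a b c : Fin m)

/-- The position of a move (the last of the positions involved). -/
def MoveSpec.pos {m : ℕ} : MoveSpec m → Fin m
  | .two _ b => b
  | .three _ _ c => c

/-- `e'` is obtained from `e` by the 2- or 3-move described by `s`. -/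
def IsMove {m : ℕ} (P : SimpleGraph V) (e e' : Fin m → Bool × V) : MoveSpec m → Prop
  | .two a b => (b : ℕ) = (a : ℕ) + 1 ∧ ¬ TAdj P (e a) (e b) ∧
      e' a = e b ∧ e' b = e a ∧ ∀ l, l ≠ a → l ≠ b → e' l = e l
  | .three a b c => (b : ℕ) = (a : ℕ) + 1 ∧ (c : ℕ) = (b : ℕ) + 1 ∧
      e c = e a ∧ TAdj P (e b) (e c) ∧
      e' a = e b ∧ e' b = e a ∧ e' c = e b ∧ ∀ l, l ≠ a → l ≠ b → l ≠ c → e' l = e l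

/-- A move is trivial if it is a 2-move interchanging entries which are not opposite. -/
def MoveTrivial {m : ℕ} (e : Fin m → Bool × V) : MoveSpec m → Prop
  | .two a b => e b ≠ negEnt (e a)
  | .three _ _ _ => False

/-- The permutation `σ` associated with a move. -/
noncomputable def moveSigma {m : ℕ} (e : Fin m → Bool × V) : MoveSpec m → Equiv.Perm (Fin m)
  | .two a b => if e b = negEnt (e a) then 1 else Equiv.swap a b
  | .three a b _ => Equiv.swap a b

/-- The skew-symmetric form `Ω` of the graph `Σ(e)`, over a commutative ring `R`. -/
noncomputable def omegaForm (R : Type*) [CommRing R] {m : ℕ} (P : SimpleGraph V)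
    (e : Fin m → Bool × V) (x y : Fin m → R) : R :=
  ∑ a : Fin m, ∑ b : Fin m, if DirEdge P e a b then x a * y b - x b * y a else 0

/-- The symplectic transvection `τ_k` of the graph `Σ(e)`, over `R`. -/
noncomputable def transv (R : Type*) [CommRing R] {m : ℕ} (P : SimpleGraph V)
    (e : Fin m → Bool × V) (k : Fin m) (x : Fin m → R) : Fin m → R :=
  x - omegaForm R P e x (Pi.single k 1) • (Pi.single k 1 : Fin m → R)

/-- The group `Γ_e ⊆ GL_m(ℤ)` generated by the transvections `τ_k`, `k ∈ B(e)`. -/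
noncomputable def Gamma {m : ℕ} (P : SimpleGraph V) (e : Fin m → Bool × V) :
    Subgroup ((Fin m → ℤ) ≃ₗ[ℤ] (Fin m → ℤ)) :=
  Subgroup.closure {g | ∃ k, BoundedIdx e k ∧ ⇑g = transv ℤ P e k}

/-- The group `Γ_e(F₂)` of linear transformations of `F₂^m` generated by the reductions
modulo 2 of the transvections `τ_k`, `k ∈ B(e)`. -/
noncomputable def GammaF2 {m : ℕ} (P : SimpleGraph V) (e : Fin m → Bool × V) :
    Subgroup (Equiv.Perm (Fin m → ZMod 2)) :=
  Subgroup.closure {g | ∃ k, BoundedIdx e k ∧ ⇑g = transv (ZMod 2) P e k}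

/-- The map `φ⁺` associated with a move. -/
noncomputable def phiP {m : ℕ} (P : SimpleGraph V) (e : Fin m → Bool × V) (s : MoveSpec m)
    (x : Fin m → ℤ) : Fin m → ℤ := fun l =>
  if l = s.pos ∧ ¬ MoveTrivial e s then
    (∑ a : Fin m, if DirEdge P e a s.pos then x a else 0) - x s.pos
  else x (moveSigma e s l)

/-- The map `φ⁻` associated with a move. -/
noncomputable def phiM {m : ℕ} (P : SimpleGraph V) (e : Fin m → Bool × V) (s : MoveSpec m)
    (x : Fin m → ℤ) : Fin m → ℤ := fun l =>
  if l = s.pos ∧ ¬ MoveTrivial e s then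
    (∑ b : Fin m, if DirEdge P e s.pos b then x b else 0) - x s.pos
  else x (moveSigma e s l)


variable {V : Type*} [DecidableEq V] [Fintype V] {W : Type*} [Group W]

/-- `p` belongs to the `(i,j)`-strip of `Σ(e)`. -/
def InStrip (i j : V) {m : ℕ} (e : Fin m → Bool × V) (p : Fin m) : Prop :=
  (e p).2 = i ∨ (e p).2 = j

/-- `p` is a vertex of the polygon bounded by two consecutive inclined edges `{B,C}` and
`{B',C'}`: a strip vertex lying (weakly) between `B` and `C'` and not strictly between
`B'` and `C'`. -/
def PolyVert (i j : V) {m : ℕ} (e : Fin m → Bool × V) (B B' C' : Fin m) (p : Fin m) : Prop :=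
  InStrip i j e p ∧ B ≤ p ∧ p ≤ C' ∧ ¬ (B' < p ∧ p < C')

/-- `{p, q}` is a side of the boundary of the polygon: one of the two inclined edges, or a
horizontal segment between consecutive polygon vertices of the same level. -/
def PolySide (i j : V) {m : ℕ} (e : Fin m → Bool × V) (B C B' C' : Fin m) (p q : Fin m) : Prop :=
  (p = B ∧ q = C) ∨ (p = B' ∧ q = C') ∨
    (PolyVert i j e B B' C' p ∧ PolyVert i j e B B' C' q ∧ p < q ∧ (e p).2 = (e q).2 ∧
      ∀ r, PolyVert i j e B B' C' r → (e r).2 = (e p).2 → ¬ (p < r ∧ r < q))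


section Aux

variable {V : Type*} [DecidableEq V]

private lemma exists_max_below {m : ℕ} (s : Fin m → Prop) (k : Fin m)
    (h : ∃ q, q < k ∧ s q) :
    ∃ q, q < k ∧ s q ∧ ∀ r, r < k → s r → r ≤ q := by
  classical
  obtain ⟨q0, hq0⟩ := h
  set t : Finset (Fin m) := Finset.univ.filter (fun q => q < k ∧ s q) with ht
  have hne : t.Nonempty := ⟨q0, by simp [ht, hq0.1, hq0.2]⟩
  have hmem := Finset.mem_filter.mp (t.max'_mem hne)
  exact ⟨t.max' hne, hmem.2.1, hmem.2.2, fun r h1 h2 =>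
    t.le_max' r (by simp [ht, h1, h2])⟩

private lemma exists_min_above {m : ℕ} (s : Fin m → Prop) (k : Fin m)
    (h : ∃ q, k < q ∧ s q) :
    ∃ q, k < q ∧ s q ∧ ∀ r, k < r → s r → q ≤ r := by
  classical
  obtain ⟨q0, hq0⟩ := h
  set t : Finset (Fin m) := Finset.univ.filter (fun q => k < q ∧ s q) with ht
  have hne : t.Nonempty := ⟨q0, by simp [ht, hq0.1, hq0.2]⟩
  have hmem := Finset.mem_filter.mp (t.min'_mem hne)
  exact ⟨t.min' hne, hmem.2.1, hmem.2.2, fun r h1 h2 =>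
    t.min'_le r (by simp [ht, h1, h2])⟩

private lemma pred_exists {m : ℕ} {e : Fin m → Bool × V} {r l : Fin m}
    (h2 : (e r).2 = (e l).2) (h1 : r < l) : ∃ p, IsPred e p l ∧ r ≤ p := by
  obtain ⟨p, hpl, hps, hmax⟩ := exists_max_below (fun q => (e q).2 = (e l).2) l ⟨r, h1, h2⟩
  exact ⟨p, ⟨hpl, hps, fun x hpx hxl hx => absurd (hmax x hxl hx) (not_le.mpr hpx)⟩,
    hmax r h1 h2⟩

private lemma incl_no_mid {m : ℕ} {P : SimpleGraph V} {e : Fin m → Bool × V} {k l : Fin m}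
    (h : InclCond P e k l) : ∀ r, k < r → r < l → (e r).2 ≠ (e l).2 := by
  intro r hkr hrl hr
  rcases h.2.2 with ⟨p, hpl, hpk, _, _⟩ | ⟨q, hqk, hp, _⟩
  · exact hpl.2.2 r (hpk.trans hkr) hrl hr
  · obtain ⟨p0, hp0, hrp0⟩ := pred_exists hr hrl
    exact absurd hrp0 (not_le.mpr ((hp p0 hp0).trans (hqk.1.trans hkr)))

private lemma incl_flip {m : ℕ} {P : SimpleGraph V} {e : Fin m → Bool × V} {k l : Fin m}
    (h : InclCond P e k l) :
    ∃ w, w < k ∧ (∀ r, w < r → r < k → (e r).2 ≠ (e k).2 ∧ (e r).2 ≠ (e l).2) ∧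
      (((e w).2 = (e k).2 ∧ (e w).1 ≠ (e k).1) ∨ ((e w).2 = (e l).2 ∧ (e w).1 = (e k).1)) := by
  have hkl : k < l := h.1
  rcases h.2.2 with ⟨p, hpl, hpk, hq, hsg⟩ | ⟨q, hqk, hp, hsg⟩
  · refine ⟨p, hpk, fun r hpr hrk => ⟨?_, ?_⟩, Or.inr ⟨hpl.2.1, hsg⟩⟩
    · intro hr
      obtain ⟨q0, hq0, hrq0⟩ := pred_exists hr hrk
      exact absurd hrq0 (not_le.mpr ((hq q0 hq0).trans hpr))
    · exact hpl.2.2 r hpr (hrk.trans hkl)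
  · refine ⟨q, hqk.1, fun r hqr hrk => ⟨fun hr => hqk.2.2 r hqr hrk hr, ?_⟩,
      Or.inl ⟨hqk.2.1, by rw [hsg]; cases (e k).1 <;> simp⟩⟩
    intro hr
    obtain ⟨p0, hp0, hrp0⟩ := pred_exists hr (hrk.trans hkl)
    exact absurd hrp0 (not_le.mpr ((hp p0 hp0).trans hqr))

private lemma flip_incl {m : ℕ} {P : SimpleGraph V} {e : Fin m → Bool × V}
    {a b : V} (hab : P.Adj a b) {w D E₀ : Fin m}
    (hwD : w < D) (hDa : (e D).2 = a)
    (hmid : ∀ r, w < r → r < D → (e r).2 ≠ a ∧ (e r).2 ≠ b)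
    (hE₀D : D < E₀) (hE₀b : (e E₀).2 = b)
    (hflip : ((e w).2 = a ∧ (e w).1 ≠ (e D).1) ∨ ((e w).2 = b ∧ (e w).1 = (e D).1)) :
    ∃ E, D < E ∧ (e E).2 = b ∧ InclCond P e D E := by
  have hab' : a ≠ b := hab.ne
  obtain ⟨E, hDE, hEb, hmin⟩ := exists_min_above (fun q => (e q).2 = b) D ⟨E₀, hE₀D, hE₀b⟩
  refine ⟨E, hDE, hEb, hDE, by rw [hDa, hEb]; exact hab, ?_⟩
  rcases hflip with ⟨hwa, hsg⟩ | ⟨hwb, hsg⟩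
  · -- case (iii): w = D⁻, sign flip
    refine Or.inr ⟨w, ⟨hwD, by rw [hwa, hDa], fun x hwx hxD hx =>
      (hmid x hwx hxD).1 (by rw [hx, hDa])⟩, ?_, ?_⟩
    · intro p hpE
      have hpb : (e p).2 = b := by rw [hpE.2.1, hEb]
      rcases lt_trichotomy p w with hlt | rfl | hgt
      · exact hlt
      · exact absurd hpb (by rw [hwa]; exact fun hh => hab' hh)
      · rcases lt_trichotomy p D with hlt' | rfl | hgt'
        · exact absurd hpb (hmid p hgt hlt').2
        · exact absurd hpb (by rw [hDa]; exact fun hh => hab' hh)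
        · exact absurd hpE.1 (not_lt.mpr (hmin p hgt' hpb))
    · cases hD : (e D).1 <;> cases hw : (e w).1 <;> simp_all
  · -- case (ii): w = E⁻ at the other level, sign equal
    refine Or.inl ⟨w, ⟨hwD.trans hDE, by rw [hwb, hEb], fun x hwx hxE hx => ?_⟩,
      hwD, fun q hq => ?_, hsg⟩
    · have hxb : (e x).2 = b := by rw [hx, hEb]
      rcases lt_trichotomy x D with hlt | rfl | hgt
      · exact (hmid x hwx hlt).2 hxb
      · exact hab' (hDa.symm.trans hxb)
      · exact absurd hxE (not_lt.mpr (hmin x hgt hxb))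
    · have hqa : (e q).2 = a := by rw [hq.2.1, hDa]
      rcases lt_trichotomy q w with hlt | rfl | hgt
      · exact hlt
      · exact absurd hqa (by rw [hwb]; exact fun hh => hab' hh.symm)
      · exact absurd hqa (hmid q hgt hq.1).1

private lemma DE_horiz {m : ℕ} {P : SimpleGraph V} {e : Fin m → Bool × V} {k l : Fin m}
    (h : IsPred e k l) :
    (DirEdge P e k l ↔ (e k).1 = true) ∧ (DirEdge P e l k ↔ (e k).1 = false) := by
  have hkl : k < l := h.1
  have hnadj : ¬ P.Adj (e k).2 (e l).2 := by rw [h.2.1]; exact P.irrefl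
  constructor
  · constructor
    · rintro (⟨_, hs⟩ | ⟨hpl, _⟩ | ⟨hI, _⟩ | ⟨hI, _⟩)
      · exact hs
      · exact absurd hpl.1 (not_lt.mpr hkl.le)
      · exact absurd hI.2.1 hnadj
      · exact absurd hI.1 (not_lt.mpr hkl.le)
    · exact fun hs => Or.inl ⟨h, hs⟩
  · constructor
    · rintro (⟨hpl, _⟩ | ⟨_, hs⟩ | ⟨hI, _⟩ | ⟨hI, _⟩)
      · exact absurd hpl.1 (not_lt.mpr hkl.le)
      · exact hs
      · exact absurd hI.1 (not_lt.mpr hkl.le)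
      · exact absurd hI.2.1 hnadj
    · exact fun hs => Or.inr (Or.inl ⟨h, hs⟩)

private lemma DE_incl {m : ℕ} {P : SimpleGraph V} {e : Fin m → Bool × V} {k l : Fin m}
    (h : InclCond P e k l) :
    (DirEdge P e k l ↔ (e k).1 = false) ∧ (DirEdge P e l k ↔ (e k).1 = true) := by
  have hkl : k < l := h.1
  have hne : (e k).2 ≠ (e l).2 := h.2.1.ne
  constructor
  · constructor
    · rintro (⟨hp, _⟩ | ⟨hp, _⟩ | ⟨_, hs⟩ | ⟨hI, _⟩)
      · exact absurd hp.2.1 hne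
      · exact absurd hp.1 (not_lt.mpr hkl.le)
      · exact hs
      · exact absurd hI.1 (not_lt.mpr hkl.le)
    · exact fun hs => Or.inr (Or.inr (Or.inl ⟨h, hs⟩))
  · constructor
    · rintro (⟨hp, _⟩ | ⟨hp, _⟩ | ⟨hI, _⟩ | ⟨_, hs⟩)
      · exact absurd hp.1 (not_lt.mpr hkl.le)
      · exact absurd hp.2.1 hne
      · exact absurd hI.1 (not_lt.mpr hkl.le)
      · exact hs
    · exact fun hs => Or.inr (Or.inr (Or.inr ⟨h, hs⟩))

private lemma bool_merge1 {α : Type*} {x y u v : α} {a b c : Bool}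
    (hxy : x ≠ y) (hu : u = x ∨ u = y) (hv : v = x ∨ v = y)
    (IH : b = a ↔ u = x) (NF : (b = c ↔ u = v)) : (c = a ↔ v = x) := by
  rcases hu with rfl | rfl <;> rcases hv with rfl | rfl <;>
    cases a <;> cases b <;> cases c <;> simp_all <;> exact fun h => hxy h.symm

private lemma bool_merge2 {α : Type*} {x y u s v : α} {a b d : Bool}
    (hxy : x ≠ y) (hu : u = x ∨ u = y) (hs : s = x ∨ s = y) (hv : v = x ∨ v = y)
    (hsv : s ≠ v) (IH : b = a ↔ u = x)
    (hfl : (u = s ∧ b ≠ d) ∨ (u = v ∧ b = d)) : (d = a ↔ s ≠ x) := by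
  rcases hu with rfl | rfl <;> rcases hs with rfl | rfl <;> rcases hv with rfl | rfl <;>
    cases a <;> cases b <;> cases d <;> simp_all

private lemma bool_merge3 {α : Type*} {x y s v : α} {a bz d : Bool}
    (hxy : x ≠ y) (hs : s = x ∨ s = y) (hv : v = x ∨ v = y) (hsv : s ≠ v)
    (IH : bz = a ↔ v = x) (SB : d = a ↔ s ≠ x) : bz = d := by
  rcases hs with rfl | rfl <;> rcases hv with rfl | rfl <;>
    cases a <;> cases bz <;> cases d <;> simp_all

private lemma bool_merge4 {α : Type*} {x y s : α} {a bh d : Bool}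
    (hxy : x ≠ y) (hs : s = x ∨ s = y)
    (IH : bh = a ↔ s = x) (SB : d = a ↔ s ≠ x) : bh ≠ d := by
  rcases hs with rfl | rfl <;> cases a <;> cases bh <;> cases d <;> simp_all

private lemma bool_merge5 {α : Type*} {x y v : α} {a b1 b2 : Bool}
    (hxy : x ≠ y) (hv : v = x ∨ v = y)
    (I1 : b1 = a ↔ v = x) (I2 : b2 = a ↔ v = x) : b1 = b2 := by
  rcases hv with rfl | rfl <;> cases a <;> cases b1 <;> cases b2 <;> simp_all

private lemma bool_ft {a : Bool} (h : ¬ a = true) : a = false := by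
  cases a <;> simp_all

private lemma bool_opp1 {a b : Bool} (h : a ≠ b) : (a = false ↔ b = true) := by
  cases a <;> cases b <;> simp_all

private lemma bool_opp2 {a b : Bool} (h : a ≠ b) : (a = true ↔ b = false) := by
  cases a <;> cases b <;> simp_all

end Aux

/-- Theorem 3.3 (b): the boundary of the triangle or trapezoid formed by two consecutive
inclined edges of a strip and the horizontal segments between them is a directed cycle:
every vertex of the polygon has exactly one outgoing and exactly one incoming boundary side. -/
theorem strip_polygon_directed_cycle (P : SimpleGraph V)
    (cs : CoxeterSystem (coxeterMatrix P) W)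
    (u v : W) {m : ℕ} (hm : m = cs.length u + cs.length v)
    (e : Fin m → Bool × V) (he : IsRWordPair P cs u v e)
    (i j : V) (hij : P.Adj i j) (B C B' C' : Fin m)
    (hB : InStrip i j e B) (hC : InStrip i j e C)
    (hB' : InStrip i j e B') (hC' : InStrip i j e C')
    (h1 : InclCond P e B C) (h2 : InclCond P e B' C')
    (hBB' : B < B') (hCC' : C < C')
    (hcons : ∀ D E : Fin m, B < D → D < B' → InStrip i j e D → InStrip i j e E →
      ¬ InclCond P e D E) :
    ∀ p, PolyVert i j e B B' C' p →
      (∃! q, (PolySide i j e B C B' C' p q ∨ PolySide i j e B C B' C' q p) ∧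
        DirEdge P e p q) ∧
      (∃! q, (PolySide i j e B C B' C' p q ∨ PolySide i j e B C B' C' q p) ∧
        DirEdge P e q p) := by
  clear hm he
  have hBCne : (e B).2 ≠ (e C).2 := h1.2.1.ne
  have hB'C'ne : (e B').2 ≠ (e C').2 := h2.2.1.ne
  have hBltC : B < C := h1.1
  have hB'ltC' : B' < C' := h2.1
  have hBltC' : B < C' := hBB'.trans hB'ltC'
  have lvmem : ∀ r, InStrip i j e r → (e r).2 = i ∨ (e r).2 = j := fun r h => h
  have two : ∀ p q r : Fin m, InStrip i j e p → InStrip i j e q → InStrip i j e r →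
      (e p).2 ≠ (e q).2 → (e r).2 = (e p).2 ∨ (e r).2 = (e q).2 := by
    intro p q r hp hq hr hne
    rcases lvmem p hp with hp' | hp' <;> rcases lvmem q hq with hq' | hq' <;>
      rcases lvmem r hr with hr' | hr' <;> simp_all
  have stripOf : ∀ p r : Fin m, InStrip i j e p → (e r).2 = (e p).2 → InStrip i j e r := by
    intro p r hp hr
    exact (lvmem p hp).imp (fun h' => hr.trans h') (fun h' => hr.trans h')
  have hCleB' : C ≤ B' := by
    by_contra hcb
    push_neg at hcb
    have h1' : (e B').2 ≠ (e C).2 := incl_no_mid h1 B' hBB' hcb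
    have h2' : (e C').2 = (e C).2 := by
      rcases two B' C C' hB' hC hC' h1' with h | h
      · exact absurd h.symm hB'C'ne
      · exact h
    exact incl_no_mid h2 C hcb hCC' h2'.symm
  have pv_of : ∀ p, InStrip i j e p → B ≤ p → p ≤ B' → PolyVert i j e B B' C' p :=
    fun p hs ha hb => ⟨hs, ha, hb.trans hB'ltC'.le, fun hcon => absurd hb (not_le.mpr hcon.1)⟩
  have pvB := pv_of B hB le_rfl hBB'.le
  have pvB' := pv_of B' hB' hBB'.le le_rfl
  have pvC := pv_of C hC hBltC.le hCleB'
  have pvC' : PolyVert i j e B B' C' C' := ⟨hC', hBltC'.le, le_rfl, fun hcon => lt_irrefl _ hcon.2⟩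
  have pv_elim : ∀ p, PolyVert i j e B B' C' p →
      InStrip i j e p ∧ B ≤ p ∧ (p ≤ B' ∨ p = C') := by
    intro p hp
    refine ⟨hp.1, hp.2.1, ?_⟩
    rcases le_or_gt p B' with h | h
    · exact Or.inl h
    · right
      rcases lt_or_eq_of_le hp.2.2.1 with h' | h'
      · exact absurd ⟨h, h'⟩ hp.2.2.2
      · exact h'
  -- the sign chain on [B, B')
  have sign_chain : ∀ n : ℕ, ∀ p : Fin m, (p : ℕ) ≤ n → InStrip i j e p → B ≤ p → p < B' →
      ((e p).1 = (e B).1 ↔ (e p).2 = (e B).2) := by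
    intro n
    induction n with
    | zero =>
      intro p hpn hSp hBp _
      have hpB : p = B := le_antisymm (Fin.le_def.mpr (by omega)) hBp
      simp [hpB]
    | succ n ih =>
      intro p hpn hSp hBp hpB'
      rcases eq_or_lt_of_le hBp with rfl | hBltp
      · simp
      · obtain ⟨w, hwp, hSw', hwmax⟩ := exists_max_below
          (fun q => (e q).2 = (e B).2 ∨ (e q).2 = (e C).2) p ⟨B, hBltp, Or.inl rfl⟩
        have hSw : InStrip i j e w := by
          rcases hSw' with h | h
          · exact stripOf B w hB h
          · exact stripOf C w hC h
        have hBw : B ≤ w := hwmax B hBltp (Or.inl rfl)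
        have hwB' : w < B' := hwp.trans hpB'
        have hwn : (w : ℕ) ≤ n := by
          have h1' : (w : ℕ) < (p : ℕ) := hwp
          omega
        have IH : (e w).1 = (e B).1 ↔ (e w).2 = (e B).2 := ih w hwn hSw hBw hwB'
        have noflip : ((e w).1 = (e p).1 ↔ (e w).2 = (e p).2) := by
          by_contra hcon
          obtain ⟨E₀, hpE₀, hE₀ne, hSE₀⟩ :
              ∃ E₀, p < E₀ ∧ (e E₀).2 ≠ (e p).2 ∧ InStrip i j e E₀ := by
            rcases two B' C' p hB' hC' hSp hB'C'ne with hpl | hpl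
            · exact ⟨C', hpB'.trans hB'ltC', by rw [hpl]; exact Ne.symm hB'C'ne, hC'⟩
            · exact ⟨B', hpB', by rw [hpl]; exact hB'C'ne, hB'⟩
          have hadj : P.Adj (e p).2 (e E₀).2 := by
            rcases lvmem p hSp with h | h <;> rcases lvmem E₀ hSE₀ with h' | h'
            · exact absurd (h'.trans h.symm) hE₀ne
            · rw [h, h']; exact hij
            · rw [h, h']; exact hij.symm
            · exact absurd (h'.trans h.symm) hE₀ne
          have hmid : ∀ r, w < r → r < p → (e r).2 ≠ (e p).2 ∧ (e r).2 ≠ (e E₀).2 := by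
            intro r hwr hrp
            have hns : ¬((e r).2 = (e B).2 ∨ (e r).2 = (e C).2) :=
              fun h => absurd (hwmax r hrp h) (not_le.mpr hwr)
            constructor
            · intro h
              rcases two B C p hB hC hSp hBCne with h' | h'
              · exact hns (Or.inl (h.trans h'))
              · exact hns (Or.inr (h.trans h'))
            · intro h
              rcases two B C E₀ hB hC hSE₀ hBCne with h' | h'
              · exact hns (Or.inl (h.trans h'))
              · exact hns (Or.inr (h.trans h'))
          have hflip : ((e w).2 = (e p).2 ∧ (e w).1 ≠ (e p).1) ∨
              ((e w).2 = (e E₀).2 ∧ (e w).1 = (e p).1) := by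
            rcases two p E₀ w hSp hSE₀ hSw (Ne.symm hE₀ne) with h | h
            · left
              refine ⟨h, fun hsg => hcon (iff_of_true hsg h)⟩
            · right
              refine ⟨h, ?_⟩
              by_contra hsg
              have hlvne : (e w).2 ≠ (e p).2 := by rw [h]; exact hE₀ne
              exact hcon (iff_of_false hsg hlvne)
          obtain ⟨E, hpE, hEb, hInc⟩ := flip_incl hadj hwp rfl hmid hpE₀ rfl hflip
          exact hcons p E hBltp hpB' hSp (stripOf E₀ E hSE₀ hEb) hInc
        exact bool_merge1 hBCne (two B C w hB hC hSw hBCne)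
          (two B C p hB hC hSp hBCne) IH noflip
  have schain : ∀ p : Fin m, InStrip i j e p → B ≤ p → p < B' →
      ((e p).1 = (e B).1 ↔ (e p).2 = (e B).2) := fun p => sign_chain (p : ℕ) p le_rfl
  -- the sign flip at B'
  have signB' : ((e B').1 = (e B).1 ↔ (e B').2 ≠ (e B).2) := by
    obtain ⟨w, hwB', hmid, hfl⟩ := incl_flip h2
    have hSw : InStrip i j e w := by
      rcases hfl with ⟨h, _⟩ | ⟨h, _⟩
      · exact stripOf B' w hB' h
      · exact stripOf C' w hC' h
    have hBw : B ≤ w := by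
      by_contra hh
      push_neg at hh
      have hmB := hmid B hh hBB'
      rcases two B' C' B hB' hC' hB hB'C'ne with h | h
      · exact hmB.1 h
      · exact hmB.2 h
    have IH := schain w hSw hBw hwB'
    exact bool_merge2 hBCne (two B C w hB hC hSw hBCne) (two B C B' hB hC hB' hBCne)
      (two B C C' hB hC hC' hBCne) hB'C'ne IH hfl
  -- right horizontal neighbour
  have mkhr : ∀ p, InStrip i j e p → B ≤ p → p < B' →
      ∃ q, p < q ∧ PolyVert i j e B B' C' q ∧ (e q).2 = (e p).2 ∧ IsPred e p q ∧
        ∀ r, PolyVert i j e B B' C' r → (e r).2 = (e p).2 → p < r → q ≤ r := by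
    intro p hSp hBp hpB'
    have hwit : ∃ q, p < q ∧ (PolyVert i j e B B' C' q ∧ (e q).2 = (e p).2) := by
      rcases two B' C' p hB' hC' hSp hB'C'ne with h | h
      · exact ⟨B', hpB', pvB', h.symm⟩
      · exact ⟨C', hpB'.trans hB'ltC', pvC', h.symm⟩
    obtain ⟨q, hpq, ⟨hqv, hqlv⟩, hqmin⟩ := exists_min_above _ p hwit
    refine ⟨q, hpq, hqv, hqlv, ⟨hpq, hqlv.symm, ?_⟩,
      fun r hrv hrlv hpr => hqmin r hpr ⟨hrv, hrlv⟩⟩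
    intro x hpx hxq hx
    have hxlv : (e x).2 = (e p).2 := hx.trans hqlv
    have hSx : InStrip i j e x := stripOf p x hSp hxlv
    rcases le_or_gt x B' with h | h
    · exact absurd (hqmin x hpx ⟨pv_of x hSx (hBp.trans hpx.le) h, hxlv⟩) (not_le.mpr hxq)
    · have hqC' : q = C' := by
        rcases (pv_elim q hqv).2.2 with hh | hh
        · exact absurd (h.trans hxq) (not_lt.mpr hh)
        · exact hh
      exact incl_no_mid h2 x h (hqC' ▸ hxq) (by rw [hx, hqC'])
  -- left horizontal neighbour
  have mkhl : ∀ p w0, InStrip i j e p → p ≤ B' → w0 < p → B ≤ w0 → (e w0).2 = (e p).2 →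
      ∃ q, q < p ∧ PolyVert i j e B B' C' q ∧ (e q).2 = (e p).2 ∧ IsPred e q p ∧
        ∀ r, PolyVert i j e B B' C' r → (e r).2 = (e p).2 → r < p → r ≤ q := by
    intro p w0 hSp hpB' hw0p hBw0 hw0lv
    obtain ⟨q, hqp, ⟨hBq, hqlv⟩, hqmax⟩ := exists_max_below
      (fun q => B ≤ q ∧ (e q).2 = (e p).2) p ⟨w0, hw0p, hBw0, hw0lv⟩
    have hqv : PolyVert i j e B B' C' q :=
      pv_of q (stripOf p q hSp hqlv) hBq (hqp.le.trans hpB')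
    refine ⟨q, hqp, hqv, hqlv, ⟨hqp, hqlv, ?_⟩,
      fun r hrv hrlv hrp => hqmax r hrp ⟨(pv_elim r hrv).2.1, hrlv⟩⟩
    intro x hqx hxp hx
    exact absurd (hqmax x hxp ⟨hBq.trans hqx.le, hx⟩) (not_le.mpr hqx)
  -- main case analysis
  intro p hp
  obtain ⟨hSp, hBp, hpc⟩ := pv_elim p hp
  rcases hpc with hpB'le | hpeq
  · by_cases hpB : p = B
    · -- p = B
      rw [hpB]
      obtain ⟨hr, hBhr, pvhr, hhrlv, hPredBhr, hhrmin⟩ := mkhr B hB le_rfl hBB'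
      have hSideBC : PolySide i j e B C B' C' B C := Or.inl ⟨rfl, rfl⟩
      have hSideBhr : PolySide i j e B C B' C' B hr :=
        Or.inr (Or.inr ⟨pvB, pvhr, hBhr, hhrlv.symm, fun r hrv hrlv hcon =>
          absurd (hhrmin r hrv hrlv hcon.1) (not_le.mpr hcon.2)⟩)
      have hDoutC : DirEdge P e B C ↔ (e B).1 = false := (DE_incl h1).1
      have hDinC : DirEdge P e C B ↔ (e B).1 = true := (DE_incl h1).2
      have hDouthr : DirEdge P e B hr ↔ (e B).1 = true := (DE_horiz hPredBhr).1
      have hDinhr : DirEdge P e hr B ↔ (e B).1 = false := (DE_horiz hPredBhr).2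
      have hclass : ∀ q, (PolySide i j e B C B' C' B q ∨ PolySide i j e B C B' C' q B) →
          q = C ∨ q = hr := by
        intro q hq
        rcases hq with hq | hq
        · rcases hq with ⟨_, h2'⟩ | ⟨h1', _⟩ | ⟨_, hqv, hlt, hlv, hmin⟩
          · exact Or.inl h2'
          · exact absurd h1' hBB'.ne
          · right
            have h := hhrmin q hqv hlv.symm hlt
            rcases eq_or_lt_of_le h with h' | h'
            · exact h'.symm
            · exact absurd ⟨hBhr, h'⟩ (hmin hr pvhr hhrlv)
        · rcases hq with ⟨_, h2'⟩ | ⟨_, h2'⟩ | ⟨hqv, _, hlt, _, _⟩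
          · exact absurd h2' hBltC.ne
          · exact absurd h2' hBltC'.ne
          · exact absurd hlt (not_lt.mpr hqv.2.1)
      constructor
      · by_cases hv : (e B).1 = true
        · exact ⟨hr, ⟨Or.inl hSideBhr, hDouthr.mpr hv⟩, fun q ⟨hside, hdir⟩ => by
            rcases hclass q hside with rfl | rfl
            · rw [hDoutC, hv] at hdir; exact absurd hdir (by simp)
            · rfl⟩
        · have hv' : (e B).1 = false := bool_ft hv
          exact ⟨C, ⟨Or.inl hSideBC, hDoutC.mpr hv'⟩, fun q ⟨hside, hdir⟩ => by
            rcases hclass q hside with rfl | rfl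
            · rfl
            · rw [hDouthr, hv'] at hdir; exact absurd hdir (by simp)⟩
      · by_cases hv : (e B).1 = true
        · exact ⟨C, ⟨Or.inl hSideBC, hDinC.mpr hv⟩, fun q ⟨hside, hdir⟩ => by
            rcases hclass q hside with rfl | rfl
            · rfl
            · rw [hDinhr, hv] at hdir; exact absurd hdir (by simp)⟩
        · have hv' : (e B).1 = false := bool_ft hv
          exact ⟨hr, ⟨Or.inl hSideBhr, hDinhr.mpr hv'⟩, fun q ⟨hside, hdir⟩ => by
            rcases hclass q hside with rfl | rfl
            · rw [hDinC, hv'] at hdir; exact absurd hdir (by simp)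
            · rfl⟩
    · by_cases hpB' : p = B'
      · -- p = B'
        rw [hpB']
        obtain ⟨L, hSideL, hDoutL, hDinL, hclassL⟩ :
            ∃ L, PolySide i j e B C B' C' L B' ∧
              (DirEdge P e B' L ↔ (e B').1 = true) ∧
              (DirEdge P e L B' ↔ (e B').1 = false) ∧
              (∀ q, (PolySide i j e B C B' C' B' q ∨ PolySide i j e B C B' C' q B') →
                q = L ∨ q = C') := by
          by_cases hB'C : B' = C
          · -- triangle case
            have hlvB'C : (e B').2 = (e C).2 := by rw [hB'C]
            have hsgBB' : (e B').1 = (e B).1 :=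
              signB'.mpr (fun h => hBCne (h.symm.trans hlvB'C))
            refine ⟨B, Or.inl ⟨rfl, hB'C⟩, ?_, ?_, ?_⟩
            · rw [hsgBB', hB'C]; exact (DE_incl h1).2
            · rw [hsgBB', hB'C]; exact (DE_incl h1).1
            · intro q hq
              rcases hq with hq | hq
              · rcases hq with ⟨h1', _⟩ | ⟨_, h2'⟩ | ⟨_, hqv, hlt, hlv, _⟩
                · exact absurd h1' hBB'.ne'
                · exact Or.inr h2'
                · exfalso
                  rcases (pv_elim q hqv).2.2 with hh | hh
                  · exact absurd hlt (not_lt.mpr hh)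
                  · exact hB'C'ne (hh ▸ hlv)
              · rcases hq with ⟨h1', _⟩ | ⟨_, h2'⟩ | ⟨hqv, _, hlt, hlv, _⟩
                · exact Or.inl h1'
                · exact absurd h2' hB'ltC'.ne
                · exfalso
                  have hlvC : (e q).2 = (e C).2 := by rw [hlv, hB'C]
                  rcases eq_or_lt_of_le (pv_elim q hqv).2.1 with hh | hh
                  · rw [← hh] at hlvC; exact hBCne hlvC
                  · exact incl_no_mid h1 q hh (hB'C ▸ hlt) hlvC
          · -- trapezoid case
            have hCltB' : C < B' := lt_of_le_of_ne hCleB' (fun h => hB'C h.symm)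
            have hwit : ∃ w0, w0 < B' ∧ B ≤ w0 ∧ (e w0).2 = (e B').2 := by
              rcases two B C B' hB hC hB' hBCne with h | h
              · exact ⟨B, hBB', le_rfl, h.symm⟩
              · exact ⟨C, hCltB', hBltC.le, h.symm⟩
            obtain ⟨w0, hw1, hw2, hw3⟩ := hwit
            obtain ⟨hl, hhlB', pvhl, hhllv, hPredhl, hhlmax⟩ := mkhl B' w0 hB' le_rfl hw1 hw2 hw3
            have hsghl : (e hl).1 ≠ (e B').1 := by
              have IHhl := schain hl (stripOf B' hl hB' hhllv) (pv_elim hl pvhl).2.1 hhlB'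
              exact bool_merge4 hBCne (two B C B' hB hC hB' hBCne)
                (by rw [hhllv] at IHhl; exact IHhl) signB'
            refine ⟨hl, Or.inr (Or.inr ⟨pvhl, pvB', hhlB', hhllv, fun r hrv hrlv hcon =>
              absurd (hhlmax r hrv (hrlv.trans hhllv) hcon.2) (not_le.mpr hcon.1)⟩), ?_, ?_, ?_⟩
            · rw [(DE_horiz hPredhl).2]
              exact bool_opp1 hsghl
            · rw [(DE_horiz hPredhl).1]
              exact bool_opp2 hsghl
            · intro q hq
              rcases hq with hq | hq
              · rcases hq with ⟨h1', _⟩ | ⟨_, h2'⟩ | ⟨_, hqv, hlt, hlv, _⟩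
                · exact absurd h1' hBB'.ne'
                · exact Or.inr h2'
                · exfalso
                  rcases (pv_elim q hqv).2.2 with hh | hh
                  · exact absurd hlt (not_lt.mpr hh)
                  · exact hB'C'ne (hh ▸ hlv)
              · rcases hq with ⟨_, h2'⟩ | ⟨_, h2'⟩ | ⟨hqv, _, hlt, hlv, hmin⟩
                · exact absurd h2' hB'C
                · exact absurd h2' hB'ltC'.ne
                · left
                  have h := hhlmax q hqv hlv hlt
                  rcases eq_or_lt_of_le h with h' | h'
                  · exact h'
                  · exact absurd ⟨h', hhlB'⟩ (hmin hl pvhl (hhllv.trans hlv.symm))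
        have hSideB'C' : PolySide i j e B C B' C' B' C' := Or.inr (Or.inl ⟨rfl, rfl⟩)
        have hDoutC' : DirEdge P e B' C' ↔ (e B').1 = false := (DE_incl h2).1
        have hDinC' : DirEdge P e C' B' ↔ (e B').1 = true := (DE_incl h2).2
        constructor
        · by_cases hv : (e B').1 = true
          · exact ⟨L, ⟨Or.inr hSideL, hDoutL.mpr hv⟩, fun q ⟨hside, hdir⟩ => by
              rcases hclassL q hside with rfl | rfl
              · rfl
              · rw [hDoutC', hv] at hdir; exact absurd hdir (by simp)⟩
          · have hv' : (e B').1 = false := bool_ft hv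
            exact ⟨C', ⟨Or.inl hSideB'C', hDoutC'.mpr hv'⟩, fun q ⟨hside, hdir⟩ => by
              rcases hclassL q hside with rfl | rfl
              · rw [hDoutL, hv'] at hdir; exact absurd hdir (by simp)
              · rfl⟩
        · by_cases hv : (e B').1 = true
          · exact ⟨C', ⟨Or.inl hSideB'C', hDinC'.mpr hv⟩, fun q ⟨hside, hdir⟩ => by
              rcases hclassL q hside with rfl | rfl
              · rw [hDinL, hv] at hdir; exact absurd hdir (by simp)
              · rfl⟩
          · have hv' : (e B').1 = false := bool_ft hv
            exact ⟨L, ⟨Or.inr hSideL, hDinL.mpr hv'⟩, fun q ⟨hside, hdir⟩ => by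
              rcases hclassL q hside with rfl | rfl
              · rfl
              · rw [hDinC', hv'] at hdir; exact absurd hdir (by simp)⟩
      · by_cases hpC : p = C
        · -- p = C
          rw [hpC]
          have hCltB' : C < B' := lt_of_le_of_ne hCleB' (fun h => hpB' (hpC.trans h))
          obtain ⟨hr, hChr, pvhr, hhrlv, hPredChr, hhrmin⟩ := mkhr C hC hBltC.le hCltB'
          have hsgC : (e C).1 ≠ (e B).1 := fun h =>
            hBCne ((schain C hC hBltC.le hCltB').mp h).symm
          have hSideBC : PolySide i j e B C B' C' B C := Or.inl ⟨rfl, rfl⟩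
          have hSideChr : PolySide i j e B C B' C' C hr :=
            Or.inr (Or.inr ⟨pvC, pvhr, hChr, hhrlv.symm, fun r hrv hrlv hcon =>
              absurd (hhrmin r hrv hrlv hcon.1) (not_le.mpr hcon.2)⟩)
          have hDoutB : DirEdge P e C B ↔ (e B).1 = true := (DE_incl h1).2
          have hDinB : DirEdge P e B C ↔ (e B).1 = false := (DE_incl h1).1
          have hDouthr : DirEdge P e C hr ↔ (e C).1 = true := (DE_horiz hPredChr).1
          have hDinhr : DirEdge P e hr C ↔ (e C).1 = false := (DE_horiz hPredChr).2
          have hclass : ∀ q, (PolySide i j e B C B' C' C q ∨ PolySide i j e B C B' C' q C) →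
              q = B ∨ q = hr := by
            intro q hq
            rcases hq with hq | hq
            · rcases hq with ⟨h1', _⟩ | ⟨h1', _⟩ | ⟨_, hqv, hlt, hlv, hmin⟩
              · exact absurd h1' hBltC.ne'
              · exact absurd h1' hCltB'.ne
              · right
                have h := hhrmin q hqv hlv.symm hlt
                rcases eq_or_lt_of_le h with h' | h'
                · exact h'.symm
                · exact absurd ⟨hChr, h'⟩ (hmin hr pvhr hhrlv)
            · rcases hq with ⟨h1', _⟩ | ⟨_, h2'⟩ | ⟨hqv, _, hlt, hlv, _⟩
              · exact Or.inl h1'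
              · exact absurd h2' hCC'.ne
              · exfalso
                rcases eq_or_lt_of_le (pv_elim q hqv).2.1 with hh | hh
                · rw [← hh] at hlv; exact hBCne hlv
                · exact incl_no_mid h1 q hh hlt hlv
          constructor
          · by_cases hv : (e C).1 = true
            · have hvB : (e B).1 = false := bool_ft (fun h => hsgC (hv.trans h.symm))
              exact ⟨hr, ⟨Or.inl hSideChr, hDouthr.mpr hv⟩, fun q ⟨hside, hdir⟩ => by
                rcases hclass q hside with rfl | rfl
                · rw [hDoutB, hvB] at hdir; exact absurd hdir (by simp)
                · rfl⟩
            · have hv' : (e C).1 = false := bool_ft hv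
              have hvB : (e B).1 = true := (bool_opp2 (Ne.symm hsgC)).mpr hv'
              exact ⟨B, ⟨Or.inr hSideBC, hDoutB.mpr hvB⟩, fun q ⟨hside, hdir⟩ => by
                rcases hclass q hside with rfl | rfl
                · rfl
                · rw [hDouthr, hv'] at hdir; exact absurd hdir (by simp)⟩
          · by_cases hv : (e C).1 = true
            · have hvB : (e B).1 = false := bool_ft (fun h => hsgC (hv.trans h.symm))
              exact ⟨B, ⟨Or.inr hSideBC, hDinB.mpr hvB⟩, fun q ⟨hside, hdir⟩ => by
                rcases hclass q hside with rfl | rfl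
                · rfl
                · rw [hDinhr, hv] at hdir; exact absurd hdir (by simp)⟩
            · have hv' : (e C).1 = false := bool_ft hv
              have hvB : (e B).1 = true := (bool_opp2 (Ne.symm hsgC)).mpr hv'
              exact ⟨hr, ⟨Or.inl hSideChr, hDinhr.mpr hv'⟩, fun q ⟨hside, hdir⟩ => by
                rcases hclass q hside with rfl | rfl
                · rw [hDinB, hvB] at hdir; exact absurd hdir (by simp)
                · rfl⟩
        · -- interior vertex
          have hBltp : B < p := lt_of_le_of_ne hBp (Ne.symm hpB)
          have hpltB' : p < B' := lt_of_le_of_ne hpB'le hpB'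
          obtain ⟨hr, hphr, pvhr, hhrlv, hPredphr, hhrmin⟩ := mkhr p hSp hBp hpltB'
          have hwit : ∃ w0, w0 < p ∧ B ≤ w0 ∧ (e w0).2 = (e p).2 := by
            rcases two B C p hB hC hSp hBCne with h | h
            · exact ⟨B, hBltp, le_rfl, h.symm⟩
            · have hCltp : C < p := by
                rcases lt_trichotomy p C with hh | hh | hh
                · exact absurd h (incl_no_mid h1 p hBltp hh)
                · exact absurd hh hpC
                · exact hh
              exact ⟨C, hCltp, hBltC.le, h.symm⟩
          obtain ⟨w0, hw1, hw2, hw3⟩ := hwit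
          obtain ⟨hl, hhlp, pvhl, hhllv, hPredhlp, hhlmax⟩ := mkhl p w0 hSp hpB'le hw1 hw2 hw3
          have hsghl : (e hl).1 = (e p).1 := by
            have I1 := schain hl (stripOf p hl hSp hhllv) (pv_elim hl pvhl).2.1
              (hhlp.trans hpltB')
            have I2 := schain p hSp hBp hpltB'
            exact bool_merge5 hBCne (two B C p hB hC hSp hBCne)
              (by rw [hhllv] at I1; exact I1) I2
          have hSidehl : PolySide i j e B C B' C' hl p :=
            Or.inr (Or.inr ⟨pvhl, hp, hhlp, hhllv, fun r hrv hrlv hcon =>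
              absurd (hhlmax r hrv (hrlv.trans hhllv) hcon.2) (not_le.mpr hcon.1)⟩)
          have hSidehr : PolySide i j e B C B' C' p hr :=
            Or.inr (Or.inr ⟨hp, pvhr, hphr, hhrlv.symm, fun r hrv hrlv hcon =>
              absurd (hhrmin r hrv hrlv hcon.1) (not_le.mpr hcon.2)⟩)
          have hD1 : DirEdge P e p hr ↔ (e p).1 = true := (DE_horiz hPredphr).1
          have hD2 : DirEdge P e hr p ↔ (e p).1 = false := (DE_horiz hPredphr).2
          have hD3 : DirEdge P e hl p ↔ (e hl).1 = true := (DE_horiz hPredhlp).1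
          have hD4 : DirEdge P e p hl ↔ (e hl).1 = false := (DE_horiz hPredhlp).2
          have hclass : ∀ q, (PolySide i j e B C B' C' p q ∨ PolySide i j e B C B' C' q p) →
              q = hl ∨ q = hr := by
            intro q hq
            rcases hq with hq | hq
            · rcases hq with ⟨h1', _⟩ | ⟨h1', _⟩ | ⟨_, hqv, hlt, hlv, hmin⟩
              · exact absurd h1' hpB
              · exact absurd h1' hpB'
              · right
                have h := hhrmin q hqv hlv.symm hlt
                rcases eq_or_lt_of_le h with h' | h'
                · exact h'.symm
                · exact absurd ⟨hphr, h'⟩ (hmin hr pvhr hhrlv)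
            · rcases hq with ⟨_, h2'⟩ | ⟨_, h2'⟩ | ⟨hqv, _, hlt, hlv, hmin⟩
              · exact absurd h2' hpC
              · exact absurd h2' (hpltB'.trans hB'ltC').ne
              · left
                have h := hhlmax q hqv hlv hlt
                rcases eq_or_lt_of_le h with h' | h'
                · exact h'
                · exact absurd ⟨h', hhlp⟩ (hmin hl pvhl (hhllv.trans hlv.symm))
          constructor
          · by_cases hv : (e p).1 = true
            · exact ⟨hr, ⟨Or.inl hSidehr, hD1.mpr hv⟩, fun q ⟨hside, hdir⟩ => by
                rcases hclass q hside with rfl | rfl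
                · rw [hD4, hsghl, hv] at hdir; exact absurd hdir (by simp)
                · rfl⟩
            · have hv' : (e p).1 = false := bool_ft hv
              exact ⟨hl, ⟨Or.inr hSidehl, hD4.mpr (by rw [hsghl, hv'])⟩,
                fun q ⟨hside, hdir⟩ => by
                rcases hclass q hside with rfl | rfl
                · rfl
                · rw [hD1, hv'] at hdir; exact absurd hdir (by simp)⟩
          · by_cases hv : (e p).1 = true
            · exact ⟨hl, ⟨Or.inr hSidehl, hD3.mpr (by rw [hsghl, hv])⟩,
                fun q ⟨hside, hdir⟩ => by
                rcases hclass q hside with rfl | rfl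
                · rfl
                · rw [hD2, hv] at hdir; exact absurd hdir (by simp)⟩
            · have hv' : (e p).1 = false := bool_ft hv
              exact ⟨hr, ⟨Or.inl hSidehr, hD2.mpr hv'⟩, fun q ⟨hside, hdir⟩ => by
                rcases hclass q hside with rfl | rfl
                · rw [hD3, hsghl, hv'] at hdir; exact absurd hdir (by simp)
                · rfl⟩
  · -- p = C'
    rw [hpeq]
    obtain ⟨z, hzC', hzlv, hzmax⟩ := exists_max_below (fun q => (e q).2 = (e C').2) C'
      (by
        rcases two B C C' hB hC hC' hBCne with hc | hc
        · exact ⟨B, hBltC', hc.symm⟩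
        · exact ⟨C, hCC', hc.symm⟩)
    have hzB : B ≤ z := by
      rcases two B C C' hB hC hC' hBCne with hc | hc
      · exact hzmax B hBltC' hc.symm
      · exact hBltC.le.trans (hzmax C hCC' hc.symm)
    have hzltB' : z < B' := by
      rcases lt_trichotomy z B' with h | h | h
      · exact h
      · exact absurd (h ▸ hzlv) hB'C'ne
      · exact absurd hzlv (incl_no_mid h2 z h hzC')
    have pvz : PolyVert i j e B B' C' z := pv_of z (stripOf C' z hC' hzlv) hzB hzltB'.le
    have hPredz : IsPred e z C' :=
      ⟨hzC', hzlv, fun x hzx hxC' hx => absurd (hzmax x hxC' hx) (not_le.mpr hzx)⟩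
    have hSidez : PolySide i j e B C B' C' z C' :=
      Or.inr (Or.inr ⟨pvz, pvC', hzC', hzlv, fun r _ hrlv hcon =>
        absurd (hzmax r hcon.2 (hrlv.trans hzlv)) (not_le.mpr hcon.1)⟩)
    have hSideB' : PolySide i j e B C B' C' B' C' := Or.inr (Or.inl ⟨rfl, rfl⟩)
    have hsgz : (e z).1 = (e B').1 := by
      have IHz := schain z (stripOf C' z hC' hzlv) hzB hzltB'
      exact bool_merge3 hBCne (two B C B' hB hC hB' hBCne) (two B C C' hB hC hC' hBCne)
        hB'C'ne (by rw [hzlv] at IHz; exact IHz) signB'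
    have hclass : ∀ q, (PolySide i j e B C B' C' C' q ∨ PolySide i j e B C B' C' q C') →
        q = z ∨ q = B' := by
      intro q hq
      rcases hq with hq | hq
      · rcases hq with ⟨h1', _⟩ | ⟨h1', _⟩ | ⟨_, hqv, hlt, _, _⟩
        · exact absurd h1' (ne_of_gt hBltC')
        · exact absurd h1' (ne_of_gt hB'ltC')
        · exact absurd hlt (not_lt.mpr hqv.2.2.1)
      · rcases hq with ⟨_, h2'⟩ | ⟨h1', _⟩ | ⟨hqv, _, hlt, hlv, hmin⟩
        · exact absurd h2' (ne_of_gt hCC')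
        · exact Or.inr h1'
        · left
          have hqz : q ≤ z := hzmax q hlt hlv
          rcases eq_or_lt_of_le hqz with h | h
          · exact h
          · exact absurd ⟨h, hzC'⟩ (hmin z pvz (hzlv.trans hlv.symm))
    have hDout : DirEdge P e C' B' ↔ (e B').1 = true := (DE_incl h2).2
    have hDin : DirEdge P e B' C' ↔ (e B').1 = false := (DE_incl h2).1
    have hDzout : DirEdge P e C' z ↔ (e z).1 = false := (DE_horiz hPredz).2
    have hDzin : DirEdge P e z C' ↔ (e z).1 = true := (DE_horiz hPredz).1
    constructor
    · by_cases hv : (e B').1 = true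
      · refine ⟨B', ⟨Or.inr hSideB', hDout.mpr hv⟩, ?_⟩
        intro q ⟨hside, hdir⟩
        rcases hclass q hside with rfl | rfl
        · rw [hDzout, hsgz, hv] at hdir; exact absurd hdir (by simp)
        · rfl
      · have hv' : (e B').1 = false := bool_ft hv
        refine ⟨z, ⟨Or.inr hSidez, hDzout.mpr (by rw [hsgz, hv'])⟩, ?_⟩
        intro q ⟨hside, hdir⟩
        rcases hclass q hside with rfl | rfl
        · rfl
        · rw [hDout, hv'] at hdir; exact absurd hdir (by simp)
    · by_cases hv : (e B').1 = true
      · refine ⟨z, ⟨Or.inr hSidez, hDzin.mpr (by rw [hsgz, hv])⟩, ?_⟩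
        intro q ⟨hside, hdir⟩
        rcases hclass q hside with rfl | rfl
        · rfl
        · rw [hDin, hv] at hdir; exact absurd hdir (by simp)
      · have hv' : (e B').1 = false := bool_ft hv
        refine ⟨B', ⟨Or.inr hSideB', hDin.mpr hv'⟩, ?_⟩
        intro q ⟨hside, hdir⟩
        rcases hclass q hside with rfl | rfl
        · rw [hDzin, hsgz, hv'] at hdir; exact absurd hdir (by simp)
        · rfl

end SLC
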